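/- Let τ : [0,∞) → [0,∞) be strictly increasing with τ(0) = 0 and liminf_{x→∞} τ(x)/x > 0. Then the convex envelope of τ, defined by τ̌(x) := sup{ f(x) : f : [0,∞) → ℝ is convex and f ≤ τ }, is strictly increasing on [0,∞). -/

import Mathlib

open Set Filter

/-- The convex envelope on `[0,∞)` of `τ : [0,∞) → ℝ`:
`τ̌(x) := sup { f(x) : f convex on [0,∞) and f ≤ τ on [0,∞) }`. -/
noncomputable def convexEnvelope (τ : ℝ → ℝ) (x : ℝ) : ℝ :=
  sSup {y : ℝ | ∃ f : ℝ → ℝ, ConvexOn ℝ (Set.Ici 0) f ∧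
    (∀ t : ℝ, 0 ≤ t → f t ≤ τ t) ∧ y = f x}

/-- If `τ : [0,∞) → [0,∞)` is strictly increasing with `τ(0) = 0` and
`liminf_{x→∞} τ(x)/x > 0` (i.e. `τ(x)/x ≥ c > 0` for all sufficiently large `x`), then its
convex envelope `τ̌` is strictly increasing on `[0,∞)`. -/
theorem stmt_8 (τ : ℝ → ℝ) (hτ_nonneg : ∀ x : ℝ, 0 ≤ x → 0 ≤ τ x)
    (hτ_strict : StrictMonoOn τ (Set.Ici 0)) (hτ_zero : τ 0 = 0)
    (hτ_growth : ∃ c > (0 : ℝ), ∀ᶠ x in Filter.atTop, c ≤ τ x / x) :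
    StrictMonoOn (convexEnvelope τ) (Set.Ici 0) := by
  obtain ⟨c, hc, hcev⟩ := hτ_growth
  obtain ⟨M₀, hM₀⟩ := Filter.eventually_atTop.mp hcev
  set S : ℝ → Set ℝ := fun x => {y : ℝ | ∃ f : ℝ → ℝ, ConvexOn ℝ (Set.Ici 0) f ∧
    (∀ t : ℝ, 0 ≤ t → f t ≤ τ t) ∧ y = f x} with hSdef
  have hE : ∀ x, convexEnvelope τ x = sSup (S x) := fun _ => rfl
  have hbdd : ∀ x : ℝ, 0 ≤ x → BddAbove (S x) := by
    intro x hx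
    refine ⟨τ x, ?_⟩
    rintro y ⟨f, hf, hfle, rfl⟩
    exact hfle x hx
  have hne : ∀ x : ℝ, (0:ℝ) ∈ S x := by
    intro x
    exact ⟨fun _ => 0, convexOn_const 0 (convex_Ici 0), fun t ht => hτ_nonneg t ht, rfl⟩
  -- positivity of the envelope on (0, ∞)
  have hpos : ∀ x : ℝ, 0 < x → 0 < convexEnvelope τ x := by
    intro x hx
    set M : ℝ := max M₀ 1 with hM
    have hM1 : (1:ℝ) ≤ M := le_max_right _ _
    have hMpos : (0:ℝ) < M := lt_of_lt_of_le one_pos hM1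
    have hhalf : 0 < x / 2 := by linarith
    have hτhalf : 0 < τ (x / 2) := by
      have := hτ_strict (le_refl (0:ℝ)) (le_of_lt hhalf) hhalf
      linarith [hτ_zero ▸ this]
    set m : ℝ := min c (τ (x/2) / M) with hmdef
    have hm : 0 < m := lt_min hc (div_pos hτhalf hMpos)
    have hmM : m * M ≤ τ (x/2) := by
      have h1 : m ≤ τ (x/2) / M := min_le_right _ _
      calc m * M ≤ (τ (x/2) / M) * M := by nlinarith
        _ = τ (x/2) := by field_simp
    have hmc : m ≤ c := min_le_left _ _
    set f : ℝ → ℝ := fun t => max (m * t - m * (x/2)) 0 with hfdef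
    have haff : ConvexOn ℝ (Ici (0:ℝ)) (fun t => m * t - m * (x/2)) := by
      refine ⟨convex_Ici 0, ?_⟩
      intro p _ q _ a b ha hb hab
      simp only [smul_eq_mul]
      refine le_of_eq ?_
      linear_combination (m * (x/2)) * hab
    have hconv : ConvexOn ℝ (Ici (0:ℝ)) f := by
      have := haff.sup (convexOn_const (0:ℝ) (convex_Ici 0))
      simpa [hfdef, Pi.sup_def] using this
    have hfle : ∀ t : ℝ, 0 ≤ t → f t ≤ τ t := by
      intro t ht
      refine max_le ?_ (hτ_nonneg t ht)
      rcases le_or_gt t M with hMt | hMt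
      · rcases le_or_gt (x/2) t with hxt | hxt
        · have hmono : τ (x/2) ≤ τ t := by
            rcases eq_or_lt_of_le hxt with h | h
            · exact le_of_eq (by rw [h])
            · exact le_of_lt (hτ_strict (le_of_lt hhalf) ht h)
          nlinarith
        · nlinarith [hτ_nonneg t ht]
      · have hM₀t : M₀ ≤ t := le_trans (le_trans (le_max_left _ _) (le_of_lt hMt)) le_rfl
        have htpos : 0 < t := lt_trans hMpos hMt
        have hct : c ≤ τ t / t := hM₀ t hM₀t
        have : c * t ≤ τ t := by
          have := mul_le_mul_of_nonneg_right hct (le_of_lt htpos)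
          calc c * t ≤ (τ t / t) * t := this
            _ = τ t := by field_simp
        nlinarith
    have hfx : f x = m * (x/2) := by
      have : m * x - m * (x/2) = m * (x/2) := by ring
      simp [hfdef, this, le_of_lt (mul_pos hm hhalf)]
    have hmem : f x ∈ S x := ⟨f, hconv, hfle, rfl⟩
    have : f x ≤ convexEnvelope τ x := by
      rw [hE]
      exact le_csSup (hbdd x (le_of_lt hx)) hmem
    have : 0 < f x := by rw [hfx]; exact mul_pos hm hhalf
    linarith [le_csSup (hbdd x (le_of_lt hx)) hmem]
  -- main proof
  intro a ha b hb hab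
  have hb0 : 0 < b := lt_of_le_of_lt ha hab
  have hEb : 0 < convexEnvelope τ b := hpos b hb0
  rcases eq_or_lt_of_le (show (0:ℝ) ≤ a from ha) with h0 | h0
  · -- a = 0
    have hle : convexEnvelope τ a ≤ 0 := by
      rw [hE]
      refine csSup_le ⟨0, hne a⟩ ?_
      rintro y ⟨f, hf, hfle, rfl⟩
      have := hfle 0 le_rfl
      rw [hτ_zero] at this
      rw [← h0]
      exact this
    linarith
  · -- 0 < a
    set t : ℝ := a / b with htdef
    have ht0 : 0 < t := div_pos h0 hb0
    have ht1 : t < 1 := (div_lt_one hb0).mpr hab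
    have htb : t * b = a := div_mul_cancel₀ a (ne_of_gt hb0)
    have hkey : convexEnvelope τ a ≤ t * convexEnvelope τ b := by
      rw [hE]
      refine csSup_le ⟨0, hne a⟩ ?_
      rintro y ⟨f, hf, hfle, rfl⟩
      have hf0 : f 0 ≤ 0 := by
        have := hfle 0 le_rfl; rw [hτ_zero] at this; exact this
      have hfb : f b ≤ convexEnvelope τ b := by
        rw [hE]
        exact le_csSup (hbdd b (le_of_lt hb0)) ⟨f, hf, hfle, rfl⟩
      have hcvx := hf.2 (Set.self_mem_Ici : (0:ℝ) ∈ Ici 0)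
        (show b ∈ Ici (0:ℝ) from le_of_lt hb0)
        (show (0:ℝ) ≤ 1 - t by linarith) (le_of_lt ht0) (by ring)
      simp only [smul_eq_mul, mul_zero, zero_add] at hcvx
      rw [htb] at hcvx
      nlinarith [mul_le_mul_of_nonneg_left hfb (le_of_lt ht0)]
    nlinarith
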